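/- arXiv:2111.12605 — 2 statements merged into one kernel-verified Lean document; each statement's English description precedes it below -/
import Mathlib

section
/- Let A be a C*-algebra, E a Hilbert A-module, n ∈ ℕ, and x₁,…,xₙ ∈ E. Then μ*ₙ(x₁,…,xₙ) = sup{ ‖Σᵢ₌₁ⁿ xᵢ·aᵢ‖ : a₁,…,aₙ ∈ A, ‖Σᵢ₌₁ⁿ aᵢ*aᵢ‖ ≤ 1 }. -/
open scoped InnerProductSpace RightActions

noncomputable section

/-- The Hilbert C⋆-module class as Mathlib stated it in December 2024 (right `A`-module). -/
class RightCStarModule (A : outParam <| Type*) (E : Type*) [NonUnitalSemiring A] [StarRing A]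
    [Module ℂ A] [AddCommGroup E] [Module ℂ E] [PartialOrder A] [SMul Aᵐᵒᵖ E] [Norm A] [Norm E]
    extends Inner A E where
  inner_add_right {x} {y} {z} : inner x (y + z) = inner x y + inner x z
  inner_self_nonneg {x} : 0 ≤ inner x x
  inner_self {x} : inner x x = 0 ↔ x = 0
  inner_op_smul_right {a : A} {x y : E} : inner x (y <• a) = inner x y * a
  inner_smul_right_complex {z : ℂ} {x} {y} : inner x (z • y) = z • inner x y
  star_inner x y : star (inner x y) = inner y x
  norm_eq_sqrt_norm_inner_self x : ‖x‖ = √‖inner x x‖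

variable {A : Type*} [NonUnitalCStarAlgebra A] [PartialOrder A] [StarOrderedRing A]
variable {E : Type*} [NormedAddCommGroup E] [NormedSpace ℂ E] [SMul Aᵐᵒᵖ E]
  [RightCStarModule A E] [CompleteSpace E]

/-- `μ*ₙ(x₁,…,xₙ) = sup { ‖Σᵢ ⟪y, xᵢ⟫⟪xᵢ, y⟫‖^(1/2) : y ∈ E, ‖y‖ ≤ 1 }`. -/
def muStar {n : ℕ} (x : Fin n → E) : ℝ :=
  ⨆ y : {y : E // ‖y‖ ≤ 1}, Real.sqrt ‖∑ i, ⟪(y : E), x i⟫_A * ⟪x i, (y : E)⟫_A‖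

instance RightCStarModule.instOp : CStarModule Aᵐᵒᵖ E where
  inner x y := MulOpposite.op (inner A x y)
  inner_add_right := by intro x y z; simp [RightCStarModule.inner_add_right]
  inner_self_nonneg := by intro x; exact MulOpposite.op_nonneg.mpr RightCStarModule.inner_self_nonneg
  inner_self := by intro x; simp [RightCStarModule.inner_self]
  inner_op_smul_right := by
    intro a x y
    have h : a • y = y <• a.unop := by simp
    rw [h, RightCStarModule.inner_op_smul_right]; rfl
  inner_smul_right_complex := by intro z x y; simp [RightCStarModule.inner_smul_right_complex]
  star_inner := by
    intro x y
    show star (MulOpposite.op (inner A x y)) = MulOpposite.op (inner A y x)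
    rw [← MulOpposite.op_star, RightCStarModule.star_inner]
  norm_eq_sqrt_norm_inner_self := by
    intro x; simp [RightCStarModule.norm_eq_sqrt_norm_inner_self (A := A) x]; rfl

lemma RightCStarModule.inner_op_def (x y : E) :
    inner Aᵐᵒᵖ x y = MulOpposite.op (inner A x y) := rfl

lemma RightCStarModule.norm_inner_le (E : Type*) [NormedAddCommGroup E] [NormedSpace ℂ E]
    [SMul Aᵐᵒᵖ E] [RightCStarModule A E] {x y : E} : ‖⟪x, y⟫_A‖ ≤ ‖x‖ * ‖y‖ := by
  exact CStarModule.norm_inner_le (A := Aᵐᵒᵖ) E (x := x) (y := y)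

lemma RightCStarModule.norm_sq_eq {x : E} : ‖x‖ ^ 2 = ‖⟪x, x⟫_A‖ := by
  rw [RightCStarModule.norm_eq_sqrt_norm_inner_self (A := A) x, Real.sq_sqrt (norm_nonneg _)]

lemma RightCStarModule.inner_op_smul_left {a : A} {x y : E} :
    ⟪x <• a, y⟫_A = star a * ⟪x, y⟫_A := by
  rw [← RightCStarModule.star_inner, RightCStarModule.inner_op_smul_right, star_mul,
    RightCStarModule.star_inner]

lemma RightCStarModule.inner_sum_right {ι : Type*} {s : Finset ι} {x : E} {y : ι → E} :
    ⟪x, ∑ i ∈ s, y i⟫_A = ∑ i ∈ s, ⟪x, y i⟫_A := by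
  have h2 := CStarModule.inner_sum_right (A := Aᵐᵒᵖ) (s := s) (x := x) (y := y)
  apply MulOpposite.op_injective
  rw [Finset.op_sum]
  exact h2

lemma RightCStarModule.inner_smul_left_real {z : ℝ} {x y : E} :
    ⟪z • x, y⟫_A = z • ⟪x, y⟫_A := by
  have := congrArg MulOpposite.unop (CStarModule.inner_smul_left_real (A := Aᵐᵒᵖ) (z := z) (x := x) (y := y))
  exact this

/-- Cauchy–Schwarz in the standard module `Aⁿ`. -/
lemma cs_pi {n : ℕ} (c a : Fin n → A) :
    ‖∑ i, star (c i) * a i‖ ≤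
      Real.sqrt ‖∑ i, star (c i) * c i‖ * Real.sqrt ‖∑ i, star (a i) * a i‖ := by
  have h := CStarModule.norm_inner_le (A := Aᵐᵒᵖ) (WithCStarModule Aᵐᵒᵖ (Fin n → Aᵐᵒᵖ))
    (x := (WithCStarModule.equiv _ _).symm (fun i => MulOpposite.op (c i)))
    (y := (WithCStarModule.equiv _ _).symm (fun i => MulOpposite.op (a i)))
  simp [WithCStarModule.pi_inner, WithCStarModule.inner_def, WithCStarModule.pi_norm] at h
  simp only [← MulOpposite.op_star, ← MulOpposite.op_mul, ← Finset.op_sum,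
    MulOpposite.norm_op] at h
  exact h

lemma op_smul_zero' (x : E) : x <• (0 : A) = 0 := by
  rw [← RightCStarModule.inner_self (A := A) (x := x <• (0 : A))]
  rw [RightCStarModule.inner_op_smul_right, mul_zero]

lemma norm_op_smul_le (x : E) (a : A) : ‖x <• a‖ ≤ ‖x‖ * ‖a‖ := by
  refine abs_le_of_sq_le_sq' ?_ (by positivity) |>.2
  rw [RightCStarModule.norm_sq_eq, RightCStarModule.inner_op_smul_right, RightCStarModule.inner_op_smul_left]
  calc ‖star a * ⟪x, x⟫_A * a‖ ≤ ‖star a‖ * ‖⟪x, x⟫_A‖ * ‖a‖ :=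
        (norm_mul_le _ _).trans (by gcongr; exact norm_mul_le _ _)
    _ = ‖⟪x, x⟫_A‖ * (‖a‖ * ‖a‖) := by rw [norm_star]; ring
    _ = ‖x‖ ^ 2 * (‖a‖ * ‖a‖) := by rw [RightCStarModule.norm_sq_eq]
    _ = (‖x‖ * ‖a‖) ^ 2 := by ring


/-- `μ*ₙ(x₁,…,xₙ) = sup { ‖Σᵢ xᵢ·aᵢ‖ : a₁,…,aₙ ∈ A, ‖Σᵢ aᵢ*aᵢ‖ ≤ 1 }`. -/
theorem muStar_eq_sup_smul {n : ℕ} (x : Fin n → E) :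
    muStar x = sSup {r : ℝ | ∃ a : Fin n → A,
      ‖∑ i, star (a i) * a i‖ ≤ 1 ∧ r = ‖∑ i, x i <• a i‖} := by
  set S := {r : ℝ | ∃ a : Fin n → A,
      ‖∑ i, star (a i) * a i‖ ≤ 1 ∧ r = ‖∑ i, x i <• a i‖} with hS
  have hS0 : (0 : ℝ) ∈ S := by
    refine ⟨0, by simp, ?_⟩
    rw [Finset.sum_congr rfl fun i _ => (by rw [Pi.zero_apply, op_smul_zero'] :
      x i <• ((0 : Fin n → A) i) = 0), Finset.sum_const_zero, norm_zero]
  have hSbdd : BddAbove S := by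
    refine ⟨∑ i, ‖x i‖, fun r hr => ?_⟩
    obtain ⟨a, ha, rfl⟩ := hr
    calc ‖∑ i, x i <• a i‖ ≤ ∑ i, ‖x i <• a i‖ := norm_sum_le _ _
      _ ≤ ∑ i, ‖x i‖ := by
          refine Finset.sum_le_sum fun i _ => ?_
          have h1 : ‖a i‖ ≤ 1 := by
            have hle : star (a i) * a i ≤ ∑ j, star (a j) * a j :=
              Finset.single_le_sum (fun j _ => star_mul_self_nonneg (a j)) (Finset.mem_univ i)
            have h2 := (CStarAlgebra.norm_le_norm_of_nonneg_of_le
              (star_mul_self_nonneg (a i)) hle).trans ha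
            nlinarith [CStarRing.norm_star_mul_self (x := a i), norm_nonneg (a i)]
          calc ‖x i <• a i‖ ≤ ‖x i‖ * ‖a i‖ := norm_op_smul_le _ _
            _ ≤ ‖x i‖ * 1 := by gcongr
            _ = ‖x i‖ := mul_one _
  have hTbdd : BddAbove (Set.range fun y : {y : E // ‖y‖ ≤ 1} =>
      Real.sqrt ‖∑ i, ⟪(y : E), x i⟫_A * ⟪x i, (y : E)⟫_A‖) := by
    refine ⟨Real.sqrt (∑ i, ‖x i‖ ^ 2), ?_⟩
    rintro r ⟨⟨y, hy⟩, rfl⟩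
    apply Real.sqrt_le_sqrt
    calc ‖∑ i, ⟪y, x i⟫_A * ⟪x i, y⟫_A‖ ≤ ∑ i, ‖⟪y, x i⟫_A * ⟪x i, y⟫_A‖ := norm_sum_le _ _
      _ ≤ ∑ i, ‖x i‖ ^ 2 := by
          refine Finset.sum_le_sum fun i _ => ?_
          calc ‖⟪y, x i⟫_A * ⟪x i, y⟫_A‖ ≤ ‖⟪y, x i⟫_A‖ * ‖⟪x i, y⟫_A‖ := norm_mul_le _ _
            _ ≤ (‖y‖ * ‖x i‖) * (‖x i‖ * ‖y‖) := by
                gcongr <;> exact RightCStarModule.norm_inner_le E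
            _ ≤ (1 * ‖x i‖) * (‖x i‖ * 1) := by gcongr
            _ = ‖x i‖ ^ 2 := by ring
  have inst : Nonempty {y : E // ‖y‖ ≤ 1} := ⟨⟨0, by simp⟩⟩
  have hT0 : 0 ≤ muStar x := by
    have h := le_ciSup hTbdd (⟨0, by simp⟩ : {y : E // ‖y‖ ≤ 1})
    rw [muStar]
    refine le_trans ?_ h
    simp
  apply le_antisymm
  · rw [muStar]
    refine ciSup_le fun ⟨y, hy⟩ => ?_
    simp only
    set t := Real.sqrt ‖∑ i, ⟪y, x i⟫_A * ⟪x i, y⟫_A‖ with ht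
    have ht2 : t ^ 2 = ‖∑ i, ⟪y, x i⟫_A * ⟪x i, y⟫_A‖ := Real.sq_sqrt (norm_nonneg _)
    rcases eq_or_lt_of_le (Real.sqrt_nonneg ‖∑ i, ⟪y, x i⟫_A * ⟪x i, y⟫_A‖) with h0 | h0
    · rw [ht, ← h0]; exact le_csSup hSbdd hS0
    · have h0t : 0 < t := ht ▸ h0
      have htne : t ≠ 0 := h0t.ne'
      set a : Fin n → A := fun i => t⁻¹ • ⟪x i, y⟫_A with ha
      have key : ∀ i, star (a i) * a i = (t⁻¹ * t⁻¹) • (⟪y, x i⟫_A * ⟪x i, y⟫_A) := by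
        intro i
        rw [ha]
        simp only [star_smul, star_trivial, RightCStarModule.star_inner,
          smul_mul_smul_comm]
      have hnorm : ‖∑ i, star (a i) * a i‖ ≤ 1 := by
        have : ∑ i, star (a i) * a i
            = (t⁻¹ * t⁻¹) • ∑ i, ⟪y, x i⟫_A * ⟪x i, y⟫_A := by
          rw [Finset.smul_sum]; exact Finset.sum_congr rfl fun i _ => key i
        rw [this, norm_smul, ← ht2, Real.norm_eq_abs,
          abs_of_pos (mul_pos (inv_pos.mpr h0t) (inv_pos.mpr h0t)), pow_two,
          mul_assoc, ← mul_assoc t⁻¹ t t, inv_mul_cancel₀ htne, one_mul,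
          inv_mul_cancel₀ htne]
      have hmem : ‖∑ i, x i <• a i‖ ∈ S := ⟨a, hnorm, rfl⟩
      have hinner : ⟪y, ∑ i, x i <• a i⟫_A
          = t⁻¹ • ∑ i, ⟪y, x i⟫_A * ⟪x i, y⟫_A := by
        rw [RightCStarModule.inner_sum_right, Finset.smul_sum]
        refine Finset.sum_congr rfl fun i _ => ?_
        rw [RightCStarModule.inner_op_smul_right, ha, mul_smul_comm]
      have htle : t ≤ ‖∑ i, x i <• a i‖ := by
        have h1 : ‖⟪y, ∑ i, x i <• a i⟫_A‖ = t := by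
          rw [hinner, norm_smul, ← ht2, Real.norm_eq_abs, abs_of_pos (inv_pos.mpr h0t),
            pow_two, ← mul_assoc, inv_mul_cancel₀ htne, one_mul]
        have h2 : ‖⟪y, ∑ i, x i <• a i⟫_A‖ ≤ ‖y‖ * ‖∑ i, x i <• a i‖ :=
          RightCStarModule.norm_inner_le E
        calc t = ‖⟪y, ∑ i, x i <• a i⟫_A‖ := h1.symm
          _ ≤ ‖y‖ * ‖∑ i, x i <• a i‖ := h2
          _ ≤ 1 * ‖∑ i, x i <• a i‖ := by gcongr
          _ = _ := one_mul _
      exact htle.trans (le_csSup hSbdd hmem)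
  · refine Real.sSup_le ?_ hT0
    rintro r ⟨a, ha, rfl⟩
    rcases eq_or_lt_of_le (norm_nonneg (∑ i, x i <• a i)) with h0 | h0
    · rw [← h0]; exact hT0
    · set z := ∑ i, x i <• a i with hz
      set s := ‖z‖ with hs
      have hsne : s ≠ 0 := ne_of_gt h0
      set y := s⁻¹ • z with hy
      have hy1 : ‖y‖ = 1 := by
        rw [hy, norm_smul, Real.norm_eq_abs, abs_of_pos (inv_pos.mpr h0), ← hs,
          inv_mul_cancel₀ hsne]
      have hsum : ⟪z, z⟫_A = ∑ i, ⟪z, x i⟫_A * a i := by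
        nth_rewrite 2 [hz]
        rw [RightCStarModule.inner_sum_right]
        exact Finset.sum_congr rfl fun i _ => RightCStarModule.inner_op_smul_right
      have hstep : s = ‖∑ i, ⟪y, x i⟫_A * a i‖ := by
        have h1 : ∑ i, ⟪y, x i⟫_A * a i = s⁻¹ • ∑ i, ⟪z, x i⟫_A * a i := by
          rw [Finset.smul_sum]
          refine Finset.sum_congr rfl fun i _ => ?_
          rw [hy, RightCStarModule.inner_smul_left_real, smul_mul_assoc]
        rw [h1, ← hsum, norm_smul, Real.norm_eq_abs, abs_of_pos (inv_pos.mpr h0),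
          ← RightCStarModule.norm_sq_eq, ← hs, pow_two, ← mul_assoc, inv_mul_cancel₀ hsne,
          one_mul]
      have hcs : s ≤ Real.sqrt ‖∑ i, ⟪y, x i⟫_A * ⟪x i, y⟫_A‖ := by
        have h1 : ∀ i, ⟪y, x i⟫_A = star ⟪x i, y⟫_A := fun i =>
          (RightCStarModule.star_inner _ _).symm
        have h2 := cs_pi (fun i => ⟪x i, y⟫_A) a
        simp only [← h1] at h2
        calc s = ‖∑ i, ⟪y, x i⟫_A * a i‖ := hstep
          _ ≤ Real.sqrt ‖∑ i, ⟪y, x i⟫_A * ⟪x i, y⟫_A‖ * Real.sqrt ‖∑ i, star (a i) * a i‖ := h2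
          _ ≤ Real.sqrt ‖∑ i, ⟪y, x i⟫_A * ⟪x i, y⟫_A‖ * 1 := by
              gcongr
              exact Real.sqrt_le_one.mpr ha
          _ = _ := mul_one _
      refine hcs.trans ?_
      rw [muStar]
      exact le_ciSup hTbdd (⟨y, hy1.le⟩ : {y : E // ‖y‖ ≤ 1})
end
end

section
/- Let A be a C*-algebra, viewed as a Hilbert A-module over itself with inner product ⟨a,b⟩ = a*b. Then every adjointable map T : A → A satisfies π̃₂(T) = ‖T‖; in particular π̃₂(T) < ∞ for every adjointable T, i.e. Π̃₂(A) = L(A). -/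
open scoped InnerProductSpace RightActions ENNReal

noncomputable section

/-- The December 2024 Mathlib `CStarModule` (right modules, `⟪x, y <• a⟫ = ⟪x, y⟫ * a`). -/
class CStarModuleRight (A : outParam <| Type*) (E : Type*) [NonUnitalSemiring A] [StarRing A]
    [Module ℂ A] [AddCommGroup E] [Module ℂ E] [PartialOrder A] [SMul Aᵐᵒᵖ E] [Norm A] [Norm E]
    extends Inner A E where
  inner_add_right {x} {y} {z} : inner x (y + z) = inner x y + inner x z
  inner_self_nonneg {x} : 0 ≤ inner x x
  inner_self {x} : inner x x = 0 ↔ x = 0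
  inner_op_smul_right {a : A} {x y : E} : inner x (y <• a) = inner x y * a
  inner_smul_right_complex {z : ℂ} {x} {y} : inner x (z • y) = z • inner x y
  star_inner x y : star (inner x y) = inner y x
  norm_eq_sqrt_norm_inner_self x : ‖x‖ = √‖inner x x‖

attribute [instance 1100] CStarModuleRight.toInner

variable {A : Type*} [NonUnitalCStarAlgebra A] [PartialOrder A] [StarOrderedRing A]

/-- The December 2024 Mathlib instance: `A` as a right module over itself, `⟪x, y⟫ = star x * y`. -/
instance CStarModuleRight.instSelf : CStarModuleRight A A where
  inner x y := star x * y
  inner_add_right := mul_add ..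
  inner_self_nonneg := star_mul_self_nonneg _
  inner_self := CStarRing.star_mul_self_eq_zero_iff _
  inner_op_smul_right := by intro a x y; simp [mul_assoc]
  inner_smul_right_complex := mul_smul_comm ..
  star_inner x y := by simp
  norm_eq_sqrt_norm_inner_self {x} := by
    rw [← sq_eq_sq₀ (norm_nonneg _) (by positivity)]
    simpa [sq] using Eq.symm <| CStarRing.norm_star_mul_self

/-- `μₙ(x₁,…,xₙ) = sup { ‖Σᵢ ⟪xᵢ, y⟫⟪y, xᵢ⟫‖^(1/2) : y ∈ E, ‖y‖ ≤ 1 }`. -/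
def mu {E : Type*} [NormedAddCommGroup E] [NormedSpace ℂ E] [SMul Aᵐᵒᵖ E]
    [CStarModuleRight A E] {n : ℕ} (x : Fin n → E) : ℝ :=
  ⨆ y : {y : E // ‖y‖ ≤ 1}, Real.sqrt ‖∑ i, ⟪x i, (y : E)⟫_A * ⟪(y : E), x i⟫_A‖

/-- `π̃₂(T) = sup { ‖Σᵢ ⟪Txᵢ, Txᵢ⟫‖^(1/2) : n ∈ ℕ, μₙ(x₁,…,xₙ) ≤ 1 }` as an element
of `[0,∞]`. -/
def piTwo {E F : Type*} [NormedAddCommGroup E] [NormedSpace ℂ E] [SMul Aᵐᵒᵖ E]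
    [CStarModuleRight A E] [NormedAddCommGroup F] [NormedSpace ℂ F] [SMul Aᵐᵒᵖ F]
    [CStarModuleRight A F] (T : E → F) : ℝ≥0∞ :=
  ⨆ (n : ℕ) (x : Fin n → E) (_ : mu x ≤ 1),
    ENNReal.ofReal (Real.sqrt ‖∑ i, ⟪T (x i), T (x i)⟫_A‖)

open WithCStarModule Finset Filter Topology

lemma selfInner_def (x y : A) : ⟪x, y⟫_A = star x * y := rfl

/-- The supremum defining `mu` is over a bounded range. -/
lemma mu_bddAbove {n : ℕ} (x : Fin n → A) :
    BddAbove (Set.range fun y : {y : A // ‖y‖ ≤ 1} =>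
      Real.sqrt ‖∑ i, ⟪x i, (y : A)⟫_A * ⟪(y : A), x i⟫_A‖) := by
  refine ⟨Real.sqrt (∑ i, ‖x i‖ ^ 2), ?_⟩
  rintro r ⟨⟨y, hy⟩, rfl⟩
  apply Real.sqrt_le_sqrt
  refine (norm_sum_le _ _).trans (Finset.sum_le_sum fun i _ => ?_)
  rw [selfInner_def, selfInner_def]
  have h1 : ‖star (x i) * y‖ ≤ ‖x i‖ := by
    refine (norm_mul_le _ _).trans ?_
    rw [norm_star]
    exact mul_le_of_le_one_right (norm_nonneg _) hy
  have h2 : ‖star y * x i‖ ≤ ‖x i‖ := by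
    refine (norm_mul_le _ _).trans ?_
    rw [norm_star]
    exact mul_le_of_le_one_left (norm_nonneg _) hy
  refine (norm_mul_le _ _).trans ?_
  rw [sq]
  exact mul_le_mul h1 h2 (norm_nonneg _) (norm_nonneg _)

lemma mu_nonneg {n : ℕ} (x : Fin n → A) : 0 ≤ mu x :=
  (Real.sqrt_nonneg _).trans (le_ciSup (mu_bddAbove x) ⟨0, by norm_num⟩)

lemma sqrt_norm_le_mu {n : ℕ} (x : Fin n → A) (y : A) (hy : ‖y‖ ≤ 1) :
    Real.sqrt ‖∑ i, (star (x i) * y) * (star y * x i)‖ ≤ mu x :=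
  le_ciSup (mu_bddAbove x) ⟨y, hy⟩

lemma norm_le_mu_sq {n : ℕ} (x : Fin n → A) (y : A) (hy : ‖y‖ ≤ 1) :
    ‖∑ i, (star (x i) * y) * (star y * x i)‖ ≤ (mu x) ^ 2 := by
  have h := sqrt_norm_le_mu x y hy
  have h2 := Real.sq_sqrt (norm_nonneg (∑ i, (star (x i) * y) * (star y * x i)))
  nlinarith [Real.sqrt_nonneg ‖∑ i, (star (x i) * y) * (star y * x i)‖]

/-- Scaled version of `norm_le_mu_sq` for `w` of arbitrary norm. -/
lemma norm_le_mu_sq' {n : ℕ} (x : Fin n → A) (w : A) :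
    ‖∑ i, (star (x i) * w) * (star w * x i)‖ ≤ (mu x) ^ 2 * ‖w‖ ^ 2 := by
  rcases eq_or_ne w 0 with rfl | hw
  · simp
  · have hc : (0:ℝ) < ‖w‖ := norm_pos_iff.mpr hw
    set u : A := ((‖w‖⁻¹ : ℝ) : ℂ) • w with hu_def
    have hu : ‖u‖ ≤ 1 := by
      rw [hu_def, norm_smul, Complex.norm_real, Real.norm_eq_abs, abs_of_nonneg (by positivity),
        inv_mul_cancel₀ hc.ne']
    have hwu : w = ((‖w‖ : ℝ) : ℂ) • u := by
      rw [hu_def, smul_smul, ← Complex.ofReal_mul, mul_inv_cancel₀ hc.ne']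
      simp
    have key : ∀ i, (star (x i) * w) * (star w * x i)
        = ((‖w‖ ^ 2 : ℝ) : ℂ) • ((star (x i) * u) * (star u * x i)) := by
      intro i
      conv_lhs => rw [hwu]
      simp only [star_smul, mul_smul_comm, smul_mul_assoc, smul_smul, RCLike.star_def,
        Complex.conj_ofReal]
      norm_cast
      rw [sq]
    calc ‖∑ i, (star (x i) * w) * (star w * x i)‖
        = ‖w‖ ^ 2 * ‖∑ i, (star (x i) * u) * (star u * x i)‖ := by
          simp_rw [key]
          rw [← Finset.smul_sum, norm_smul, Complex.norm_real, Real.norm_eq_abs,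
            abs_of_nonneg (by positivity)]
      _ ≤ ‖w‖ ^ 2 * (mu x) ^ 2 := by
          gcongr
          exact norm_le_mu_sq x u hu
      _ = (mu x) ^ 2 * ‖w‖ ^ 2 := mul_comm _ _

/-- `μₙ(x) ≤ ‖Σ xᵢ* xᵢ‖^(1/2)`. -/
lemma mu_le_sqrt {n : ℕ} (x : Fin n → A) :
    mu x ≤ Real.sqrt ‖∑ i, star (x i) * x i‖ := by
  have : Nonempty {y : A // ‖y‖ ≤ 1} := ⟨⟨0, by norm_num⟩⟩
  apply ciSup_le
  rintro ⟨y, hy⟩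
  apply Real.sqrt_le_sqrt
  simp only [selfInner_def]
  have hterm : ∀ i ∈ univ, (star (x i) * y) * (star y * x i)
      ≤ ‖y * star y‖ • (star (x i) * x i) := by
    intro i _
    have h := CStarAlgebra.star_left_conjugate_le_norm_smul (a := x i) (b := y * star y)
      (IsSelfAdjoint.mul_star_self y)
    calc (star (x i) * y) * (star y * x i) = star (x i) * (y * star y) * x i := by
          simp only [mul_assoc]
      _ ≤ ‖y * star y‖ • (star (x i) * x i) := h
  have hsum := Finset.sum_le_sum hterm
  rw [← Finset.smul_sum] at hsum
  have h0 : (0:A) ≤ ∑ i, (star (x i) * y) * (star y * x i) := by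
    refine Finset.sum_nonneg fun i _ => ?_
    simpa [star_mul, star_star, mul_assoc] using star_mul_self_nonneg (star y * x i)
  calc ‖∑ i, (star (x i) * y) * (star y * x i)‖
      ≤ ‖‖y * star y‖ • ∑ i, star (x i) * x i‖ :=
        CStarAlgebra.norm_le_norm_of_nonneg_of_le h0 hsum
    _ = ‖y * star y‖ * ‖∑ i, star (x i) * x i‖ := by
        rw [norm_smul, Real.norm_eq_abs, abs_of_nonneg (norm_nonneg _)]
    _ ≤ 1 * ‖∑ i, star (x i) * x i‖ := by
        gcongr
        rw [CStarRing.norm_self_mul_star]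
        exact mul_le_one₀ hy (norm_nonneg _) hy
    _ = ‖∑ i, star (x i) * x i‖ := one_mul _

/-- `‖Σ xᵢ* xᵢ‖ ≤ μₙ(x)²`, proved using an increasing approximate unit. -/
lemma norm_sum_le_mu_sq {n : ℕ} (x : Fin n → A) :
    ‖∑ i, star (x i) * x i‖ ≤ (mu x) ^ 2 := by
  have hl := CStarAlgebra.increasingApproximateUnit A
  set l := CStarAlgebra.approximateUnit A with hldef
  have : l.NeBot := hl.neBot
  have key : ∀ a : A, Tendsto (fun y : A => (star a * y) * (star y * a)) l (𝓝 (star a * a)) := by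
    intro a
    have h1 : Tendsto (fun y : A => star y * a) l (𝓝 a) := by
      refine (hl.tendsto_mul_right a).congr' ?_
      filter_upwards [hl.eventually_star_eq] with y hy
      rw [hy]
    have t1 : Tendsto (fun y : A => y * a - a) l (𝓝 0) := by
      simpa using (hl.tendsto_mul_right a).sub_const a
    have h1' : Tendsto (fun y : A => ‖star y * a - a‖) l (𝓝 0) := by
      simpa using (h1.sub_const a).norm
    have t2 : Tendsto (fun y : A => y * (star y * a - a)) l (𝓝 0) := by
      refine squeeze_zero_norm' ?_ h1'
      filter_upwards [hl.eventually_norm] with y hy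
      exact (norm_mul_le _ _).trans (mul_le_of_le_one_left (norm_nonneg _) hy)
    have t3 : Tendsto (fun y : A => y * (star y * a)) l (𝓝 a) := by
      have := (t2.add t1).add_const a
      rw [zero_add, zero_add] at this
      refine this.congr fun y => ?_
      rw [mul_sub]
      abel
    have := t3.const_mul (star a)
    refine this.congr fun y => ?_
    simp only [mul_assoc]
  have tend : Tendsto (fun y : A => ‖∑ i, (star (x i) * y) * (star y * x i)‖) l
      (𝓝 ‖∑ i, star (x i) * x i‖) :=
    (tendsto_finset_sum univ fun i _ => key (x i)).norm
  refine le_of_tendsto tend ?_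
  filter_upwards [hl.eventually_norm] with y hy
  exact norm_le_mu_sq x y hy

/-- Viewing a C*-algebra `A` as a Hilbert `A`-module over itself (`⟪a, b⟫ = a* b`), every
adjointable `T : A → A` satisfies `π̃₂(T) = ‖T‖`; in particular `π̃₂(T) < ∞`, i.e.
`Π̃₂(A) = L(A)`. -/
theorem piTwo_eq_norm_of_adjointable (T : A →L[ℂ] A) (S : A →L[ℂ] A)
    (hT : ∀ (a b : A), ⟪T a, b⟫_A = ⟪a, S b⟫_A) :
    piTwo (⇑T) = ENNReal.ofReal ‖T‖ ∧ piTwo (⇑T) < ⊤ := by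
  simp only [selfInner_def] at hT
  have hS : ∀ y : A, ‖y‖ ≤ 1 → ‖S y‖ ≤ ‖T‖ := by
    intro y hy
    rcases eq_or_ne (S y) 0 with h0 | h0
    · rw [h0, norm_zero]; exact norm_nonneg T
    · have h2 : ‖S y‖ * ‖S y‖ = ‖star (T (S y)) * y‖ := by
        rw [hT (S y) y, CStarRing.norm_star_mul_self]
      have h3 : ‖star (T (S y)) * y‖ ≤ ‖T‖ * ‖S y‖ := by
        calc ‖star (T (S y)) * y‖ ≤ ‖T (S y)‖ * ‖y‖ := by
              refine (norm_mul_le _ _).trans ?_; rw [norm_star]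
          _ ≤ (‖T‖ * ‖S y‖) * 1 := by
              gcongr
              exact T.le_opNorm (S y)
          _ = ‖T‖ * ‖S y‖ := mul_one _
      have := h2.trans_le h3
      exact le_of_mul_le_mul_right this (norm_pos_iff.mpr h0)
  have upper : piTwo (⇑T) ≤ ENNReal.ofReal ‖T‖ := by
    refine iSup_le fun n => iSup_le fun x => iSup_le fun hmu => ?_
    apply ENNReal.ofReal_le_ofReal
    set z := fun i => T (x i) with hz
    have hNE : Nonempty {y : A // ‖y‖ ≤ 1} := ⟨⟨0, by norm_num⟩⟩
    have hmuz : mu z ≤ ‖T‖ := by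
      apply ciSup_le
      rintro ⟨y, hy⟩
      simp only [selfInner_def]
      have heq : ∀ i, (star (z i) * y) * (star y * z i)
          = (star (x i) * S y) * (star (S y) * x i) := by
        intro i
        have h1 : star (z i) * y = star (x i) * S y := hT (x i) y
        have h2 : star y * z i = star (S y) * x i := by
          have := congrArg star h1
          simpa [star_mul, star_star] using this
        rw [h1, h2]
      simp_rw [heq]
      have hb : ‖∑ i, (star (x i) * S y) * (star (S y) * x i)‖ ≤ ‖T‖ ^ 2 := by
        refine (norm_le_mu_sq' x (S y)).trans ?_
        calc (mu x) ^ 2 * ‖S y‖ ^ 2 ≤ 1 ^ 2 * ‖T‖ ^ 2 := by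
              gcongr <;> first | exact mu_nonneg x | exact hmu | exact hS y hy
          _ = ‖T‖ ^ 2 := by ring
      calc Real.sqrt ‖∑ i, (star (x i) * S y) * (star (S y) * x i)‖
          ≤ Real.sqrt (‖T‖ ^ 2) := Real.sqrt_le_sqrt hb
        _ = ‖T‖ := Real.sqrt_sq (norm_nonneg T)
    have : ‖∑ i, star (z i) * z i‖ ≤ ‖T‖ ^ 2 := by
      refine (norm_sum_le_mu_sq z).trans ?_
      exact pow_le_pow_left₀ (mu_nonneg z) hmuz 2
    calc Real.sqrt ‖∑ i, star (T (x i)) * T (x i)‖ ≤ Real.sqrt (‖T‖ ^ 2) :=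
          Real.sqrt_le_sqrt this
      _ = ‖T‖ := Real.sqrt_sq (norm_nonneg T)
  have hfin : piTwo (⇑T) ≠ ⊤ := (upper.trans_lt ENNReal.ofReal_lt_top).ne
  have hx1 : ∀ a : A, ‖a‖ ≤ 1 → ENNReal.ofReal ‖T a‖ ≤ piTwo (⇑T) := by
    intro a ha
    have hmu1 : mu (fun _ : Fin 1 => a) ≤ 1 := by
      refine (mu_le_sqrt _).trans ?_
      rw [Fin.sum_univ_one, CStarRing.norm_star_mul_self, Real.sqrt_mul_self (norm_nonneg a)]
      exact ha
    have hval : Real.sqrt ‖∑ _i : Fin 1, ⟪T a, T a⟫_A‖ = ‖T a‖ := by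
      rw [Fin.sum_univ_one, selfInner_def, CStarRing.norm_star_mul_self,
        Real.sqrt_mul_self (norm_nonneg _)]
    calc ENNReal.ofReal ‖T a‖
        = ENNReal.ofReal (Real.sqrt ‖∑ _i : Fin 1, ⟪T a, T a⟫_A‖) := by rw [hval]
      _ ≤ piTwo (⇑T) :=
          le_iSup_of_le 1 (le_iSup_of_le (fun _ => a) (le_iSup_of_le hmu1 le_rfl))
  have hnorm : ‖T‖ ≤ (piTwo (⇑T)).toReal := by
    refine T.opNorm_le_bound ENNReal.toReal_nonneg fun a => ?_
    rcases eq_or_ne a 0 with rfl | ha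
    · simp
    · have hc : (0:ℝ) < ‖a‖ := norm_pos_iff.mpr ha
      have hu : ‖((‖a‖⁻¹ : ℝ) : ℂ) • a‖ ≤ 1 := by
        rw [norm_smul, Complex.norm_real, Real.norm_eq_abs, abs_of_nonneg (by positivity),
          inv_mul_cancel₀ hc.ne']
      have h := hx1 _ hu
      rw [map_smul, norm_smul, Complex.norm_real, Real.norm_eq_abs,
        abs_of_nonneg (by positivity)] at h
      rw [ENNReal.ofReal_le_iff_le_toReal hfin] at h
      calc ‖T a‖ = ‖a‖ * (‖a‖⁻¹ * ‖T a‖) := by field_simp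
        _ ≤ ‖a‖ * (piTwo (⇑T)).toReal := by gcongr
        _ = (piTwo (⇑T)).toReal * ‖a‖ := mul_comm _ _
  have lower : ENNReal.ofReal ‖T‖ ≤ piTwo (⇑T) := by
    calc ENNReal.ofReal ‖T‖ ≤ ENNReal.ofReal (piTwo (⇑T)).toReal :=
          ENNReal.ofReal_le_ofReal hnorm
      _ = piTwo (⇑T) := ENNReal.ofReal_toReal hfin
  exact ⟨le_antisymm upper lower, upper.trans_lt ENNReal.ofReal_lt_top⟩
end
end
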